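/- Let {q_1, ..., q_d} ⊂ K ⊂ B(0, R) be a β-barycentric spanner for K, M = (q_1,...,q_d), Q = M M^T, and φ(x) = (1/2) x^T Q^{-1} x. Then for every x in K and every α > 0, φ(α x) <= α² β² d / 2. Moreover, the strong convexity modulus of φ satisfies λ_min(Q^{-1}) >= 1/(R² d). -/
import Mathlib


open Matrix Finset

lemma key_quad {d : ℕ} (M : Matrix (Fin d) (Fin d) ℝ) (hM : IsUnit M)
    (w : Fin d → ℝ) :
    (Mᵀ *ᵥ w) ⬝ᵥ ((Mᵀ * M)⁻¹ *ᵥ (Mᵀ *ᵥ w)) = ∑ i, w i ^ 2 := by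
  have hdet : IsUnit M.det := (Matrix.isUnit_iff_isUnit_det M).mp hM
  have hdetT : IsUnit Mᵀ.det := by rwa [Matrix.det_transpose]
  have h1 : (Mᵀ * M)⁻¹ = M⁻¹ * Mᵀ⁻¹ := Matrix.mul_inv_rev _ _
  rw [h1, Matrix.mulVec_mulVec, Matrix.mul_assoc,
    Matrix.nonsing_inv_mul _ hdetT, Matrix.mul_one, Matrix.mulVec_transpose,
    Matrix.dotProduct_mulVec, Matrix.vecMul_vecMul, Matrix.mul_nonsing_inv _ hdet,
    Matrix.vecMul_one]
  simp [dotProduct, sq]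

theorem barycentric_regularizer_bounds
    {d : ℕ} (hd : 0 < d) (R β : ℝ) (hR : 0 < R) (hβ : 0 < β)
    (K : Set (Fin d → ℝ)) (hK : ∀ x ∈ K, ∑ i, x i ^ 2 ≤ R ^ 2)
    (q : Fin d → (Fin d → ℝ)) (hq : LinearIndependent ℝ q) (hqK : ∀ i, q i ∈ K)
    (hspanner : ∀ x ∈ K, ∃ b : Fin d → ℝ, (∀ i, |b i| ≤ β) ∧ x = ∑ i, b i • q i)
    (Q : Matrix (Fin d) (Fin d) ℝ)
    (hQ : Q = ∑ i, Matrix.vecMulVec (q i) (q i)) :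
    (∀ x ∈ K, ∀ α : ℝ, 0 < α →
      (1 / 2) * ((α • x) ⬝ᵥ (Q⁻¹ *ᵥ (α • x))) ≤ α ^ 2 * β ^ 2 * d / 2) ∧
      (∀ z : Fin d → ℝ, (1 / (R ^ 2 * d)) * (∑ i, z i ^ 2) ≤ z ⬝ᵥ (Q⁻¹ *ᵥ z)) := by
  set M : Matrix (Fin d) (Fin d) ℝ := Matrix.of (fun i j => q i j) with hM
  have hMunit : IsUnit M := by
    rw [← Matrix.linearIndependent_rows_iff_isUnit]
    exact hq
  have hQM : Q = Mᵀ * M := by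
    subst hQ
    ext a b
    simp [Matrix.sum_apply, Matrix.mul_apply, Matrix.vecMulVec_apply, hM, mul_comm]
  -- representation: if x = ∑ b i • q i then x = Mᵀ *ᵥ b
  have hrep : ∀ b : Fin d → ℝ, (∑ i, b i • q i) = Mᵀ *ᵥ b := by
    intro b
    funext j
    simp [Matrix.mulVec, dotProduct, hM, mul_comm, Finset.sum_apply]
  constructor
  · intro x hx α hα
    obtain ⟨b, hb, hxb⟩ := hspanner x hx
    have hx' : α • x = Mᵀ *ᵥ (α • b) := by
      rw [hxb, hrep, Matrix.mulVec_smul]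
    have := key_quad M hMunit (α • b)
    rw [hx', hQM, this]
    have hsum : ∑ i, (α • b) i ^ 2 ≤ α ^ 2 * β ^ 2 * d := by
      have : ∀ i, (α • b) i ^ 2 ≤ α ^ 2 * β ^ 2 := by
        intro i
        have h1 : b i ^ 2 ≤ β ^ 2 := by
          have := hb i
          nlinarith [abs_nonneg (b i), sq_abs (b i)]
        have : (α • b) i ^ 2 = α ^ 2 * b i ^ 2 := by
          simp [Pi.smul_apply, mul_pow]
        rw [this]
        nlinarith [sq_nonneg α]
      calc ∑ i, (α • b) i ^ 2 ≤ ∑ _i : Fin d, α ^ 2 * β ^ 2 :=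
            Finset.sum_le_sum (fun i _ => this i)
        _ = α ^ 2 * β ^ 2 * d := by simp [mul_comm]
    linarith
  · intro z
    set w : Fin d → ℝ := Mᵀ⁻¹ *ᵥ z with hw
    have hdetT : IsUnit Mᵀ.det := by
      rw [Matrix.det_transpose]; exact (Matrix.isUnit_iff_isUnit_det M).mp hMunit
    have hz : z = Mᵀ *ᵥ w := by
      rw [hw, Matrix.mulVec_mulVec, Matrix.mul_nonsing_inv _ hdetT, Matrix.one_mulVec]
    have hqd : z ⬝ᵥ (Q⁻¹ *ᵥ z) = ∑ i, w i ^ 2 := by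
      rw [hQM]
      rw [hz]
      exact key_quad M hMunit w
    rw [hqd]
    -- z j = ∑ i, w i * q i j
    have hzj : ∀ j, z j = ∑ i, w i * q i j := by
      intro j
      rw [hz]
      simp [Matrix.mulVec, dotProduct, hM, mul_comm]
    have hcs : ∀ j, z j ^ 2 ≤ (∑ i, w i ^ 2) * (∑ i, q i j ^ 2) := by
      intro j
      rw [hzj j]
      exact Finset.sum_mul_sq_le_sq_mul_sq _ _ _
    have hzsum : ∑ j, z j ^ 2 ≤ (∑ i, w i ^ 2) * (R ^ 2 * d) := by
      calc ∑ j, z j ^ 2 ≤ ∑ j, (∑ i, w i ^ 2) * (∑ i, q i j ^ 2) :=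
            Finset.sum_le_sum (fun j _ => hcs j)
        _ = (∑ i, w i ^ 2) * (∑ i, ∑ j, q i j ^ 2) := by
            rw [← Finset.mul_sum, Finset.sum_comm]
        _ ≤ (∑ i, w i ^ 2) * (∑ _i : Fin d, R ^ 2) := by
            apply mul_le_mul_of_nonneg_left
            · exact Finset.sum_le_sum (fun i _ => hK (q i) (hqK i))
            · exact Finset.sum_nonneg (fun i _ => sq_nonneg _)
        _ = (∑ i, w i ^ 2) * (R ^ 2 * d) := by simp [mul_comm]
    have hpos : (0:ℝ) < R ^ 2 * d := by positivity
    rw [div_mul_eq_mul_div, one_mul, div_le_iff₀ hpos]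
    linarith
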